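/- Let A = R ◊_{σ,α} G be a crystalline graded ring with R a commutative domain and G finite, W = Ker σ. An element Σ_{s∈G} r_s u_s lies in Z(A) if and only if r_s = 0 for all s ∉ W and σ_x(r_s)·α(x,s) = r_{xsx^{-1}}·α(xsx^{-1},x) for all x ∈ G and s ∈ W. -/
import Mathlib


/-- A crystalline graded ring `A = D ◊_{σ,α} G` over a commutative domain `D`:
`D` embeds in `A` via `ι`, `u : G → A` with `u_e = 1`, the automorphisms
`σ : G → Aut(D)` form a group morphism (as `D` is commutative, `σ_{gh} = σ_g σ_h`),
`α : G × G → D \ {0}` satisfies `u_g r = σ_g(r) u_g`, `u_g u_h = α(g,h) u_{gh}`,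
`α(g,e) = α(e,g) = 1` and the 2-cocycle relation, and `A = ⊕_g D u_g` (the
`basis` field).  The kernel of the twist is `W = {g : σ_g = 1}`. -/
structure CrysDom (G D A : Type*) [Group G] [CommRing D] [IsDomain D] [Ring A] where
  ι : D →+* A
  inj : Function.Injective ι
  u : G → A
  σ : G →* RingAut D
  α : G → G → D
  α_ne_zero : ∀ g h : G, α g h ≠ 0
  u_one : u 1 = 1
  comm : ∀ (g : G) (r : D), u g * ι r = ι (σ g r) * u g
  mul_u : ∀ g h : G, u g * u h = ι (α g h) * u (g * h)
  α_one_left : ∀ g : G, α 1 g = 1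
  α_one_right : ∀ g : G, α g 1 = 1
  cocycle : ∀ g h t : G, α g h * α (g * h) t = σ g (α h t) * α g (h * t)
  basis : Function.Bijective (fun f : G →₀ D => f.sum fun g r => ι r * u g)

namespace CrysDomAux

variable {G D A : Type*} [Group G] [Fintype G] [CommRing D] [IsDomain D] [Ring A]
  (P : CrysDom G D A)

lemma finsupp_sum_eq (f : G → D) :
    (Finsupp.equivFunOnFinite.symm f).sum (fun g r => P.ι r * P.u g)
      = ∑ g : G, P.ι (f g) * P.u g := by
  rw [Finsupp.sum_fintype]
  · simp
  · intro g; simp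

lemma sum_inj {f f' : G → D}
    (h : ∑ g : G, P.ι (f g) * P.u g = ∑ g : G, P.ι (f' g) * P.u g) : f = f' := by
  have h2 : Finsupp.equivFunOnFinite.symm f = Finsupp.equivFunOnFinite.symm f' :=
    P.basis.injective (by rw [finsupp_sum_eq, finsupp_sum_eq, h])
  exact Finsupp.equivFunOnFinite.symm.injective h2

lemma sum_surj (a : A) : ∃ f : G → D, a = ∑ g : G, P.ι (f g) * P.u g := by
  obtain ⟨c, hc⟩ := P.basis.surjective a
  refine ⟨fun g => c g, ?_⟩
  rw [← finsupp_sum_eq]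
  simp only [Finsupp.equivFunOnFinite_symm_coe]
  exact hc.symm


lemma mul_iota (r' : G → D) (d : D) :
    (∑ s : G, P.ι (r' s) * P.u s) * P.ι d
      = ∑ s : G, P.ι (r' s * P.σ s d) * P.u s := by
  rw [Finset.sum_mul]
  refine Finset.sum_congr rfl fun s _ => ?_
  rw [mul_assoc, P.comm, ← mul_assoc, ← map_mul]

lemma iota_mul (r' : G → D) (d : D) :
    P.ι d * (∑ s : G, P.ι (r' s) * P.u s)
      = ∑ s : G, P.ι (d * r' s) * P.u s := by
  rw [Finset.mul_sum]
  refine Finset.sum_congr rfl fun s _ => ?_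
  rw [← mul_assoc, ← map_mul]

lemma u_mul (r' : G → D) (x : G) :
    P.u x * (∑ s : G, P.ι (r' s) * P.u s)
      = ∑ g : G, P.ι (P.σ x (r' (x⁻¹ * g)) * P.α x (x⁻¹ * g)) * P.u g := by
  rw [Finset.mul_sum]
  refine Fintype.sum_equiv (Equiv.mulLeft x) _ _ fun s => ?_
  simp only [Equiv.coe_mulLeft, inv_mul_cancel_left]
  rw [← mul_assoc, P.comm, mul_assoc, P.mul_u, ← mul_assoc, ← map_mul]

lemma mul_u' (r' : G → D) (x : G) :
    (∑ s : G, P.ι (r' s) * P.u s) * P.u x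
      = ∑ g : G, P.ι (r' (g * x⁻¹) * P.α (g * x⁻¹) x) * P.u g := by
  rw [Finset.sum_mul]
  refine Fintype.sum_equiv (Equiv.mulRight x) _ _ fun s => ?_
  simp only [Equiv.coe_mulRight, mul_inv_cancel_right]
  rw [mul_assoc, P.mul_u, ← mul_assoc, ← map_mul]

omit [Fintype G] in
lemma conj_ker {x s : G} (h : P.σ (x * s * x⁻¹) = 1) : P.σ s = 1 := by
  have h2 : P.σ x * P.σ s * (P.σ x)⁻¹ = 1 := by
    rw [← map_mul, ← map_inv, ← map_mul, h]
  have h3 : P.σ x * P.σ s = P.σ x := by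
    have := congrArg (· * P.σ x) h2
    simpa [mul_assoc] using this
  simpa using h3

end CrysDomAux


open CrysDomAux in
/-- `Σ_{s ∈ G} r_s u_s ∈ Z(A)` iff `r_s = 0` for `s ∉ W = Ker σ` and
`σ_x(r_s) α(x,s) = r_{xsx⁻¹} α(xsx⁻¹,x)` for all `x ∈ G`, `s ∈ W`. -/
theorem central_iff {G D A : Type*} [Group G] [Fintype G]
    [CommRing D] [IsDomain D] [Ring A] (P : CrysDom G D A) (r : G → D) :
    (∑ s : G, P.ι (r s) * P.u s) ∈ Subring.center A ↔
      ((∀ s : G, P.σ s ≠ 1 → r s = 0) ∧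
        ∀ (x s : G), P.σ s = 1 →
          P.σ x (r s) * P.α x s = r (x * s * x⁻¹) * P.α (x * s * x⁻¹) x) := by
  rw [Subring.mem_center_iff]
  constructor
  · intro h
    -- commutation with ι d
    have hd : ∀ (d : D) (s : G), d * r s = r s * P.σ s d := by
      intro d s
      have := sum_inj P ((iota_mul P r d).symm.trans ((h (P.ι d)).trans (mul_iota P r d)))
      exact congrFun this s
    have h1 : ∀ s : G, P.σ s ≠ 1 → r s = 0 := by
      intro s hs
      obtain ⟨d, hd'⟩ : ∃ d, P.σ s d ≠ d := by
        by_contra hc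
        push_neg at hc
        exact hs (by ext d; rw [hc d]; rfl)
      have : r s * (P.σ s d - d) = 0 := by
        rw [mul_sub, ← hd d s, mul_comm, sub_self]
      rcases mul_eq_zero.mp this with h' | h'
      · exact h'
      · exact absurd (sub_eq_zero.mp h') hd'
    refine ⟨h1, fun x s _ => ?_⟩
    have := sum_inj P ((u_mul P r x).symm.trans ((h (P.u x)).trans (mul_u' P r x)))
    have := congrFun this (x * s)
    simpa [inv_mul_cancel_left, mul_assoc] using this
  · rintro ⟨h1, h2⟩ a
    obtain ⟨f, rfl⟩ := sum_surj P a
    rw [Finset.sum_mul, Finset.mul_sum]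
    refine Finset.sum_congr rfl fun g _ => ?_
    -- commutation with ι d
    have hiota : ∀ d : D, P.ι d * (∑ s : G, P.ι (r s) * P.u s)
        = (∑ s : G, P.ι (r s) * P.u s) * P.ι d := by
      intro d
      rw [iota_mul P r d, mul_iota P r d]
      refine Finset.sum_congr rfl fun s _ => ?_
      by_cases hs : P.σ s = 1
      · rw [hs, show (1 : RingAut D) d = d from rfl, mul_comm]
      · rw [h1 s hs]; simp
    have hu : ∀ x : G, P.u x * (∑ s : G, P.ι (r s) * P.u s)
        = (∑ s : G, P.ι (r s) * P.u s) * P.u x := by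
      intro x
      rw [u_mul P r x, mul_u' P r x]
      refine Finset.sum_congr rfl fun g _ => ?_
      congr 1
      set s := x⁻¹ * g with hsdef
      have hg : g = x * s := by rw [hsdef, mul_inv_cancel_left]
      have hg2 : g * x⁻¹ = x * s * x⁻¹ := by rw [hg]
      rw [hg2]
      by_cases hs : P.σ s = 1
      · rw [h2 x s hs]
      · rw [h1 s hs, h1 (x * s * x⁻¹) (fun hc => hs (conj_ker P hc))]
        simp
    calc P.ι (f g) * P.u g * (∑ s : G, P.ι (r s) * P.u s)
        = P.ι (f g) * (P.u g * (∑ s : G, P.ι (r s) * P.u s)) := by rw [mul_assoc]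
      _ = P.ι (f g) * ((∑ s : G, P.ι (r s) * P.u s) * P.u g) := by rw [hu g]
      _ = (P.ι (f g) * (∑ s : G, P.ι (r s) * P.u s)) * P.u g := by rw [mul_assoc]
      _ = ((∑ s : G, P.ι (r s) * P.u s) * P.ι (f g)) * P.u g := by rw [hiota (f g)]
      _ = (∑ s : G, P.ι (r s) * P.u s) * (P.ι (f g) * P.u g) := by rw [mul_assoc]
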